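/- The signed sum over all permutations π ∈ S_n of sgn(π) times the number of π-families equals the number of disjoint n-families (a Lindström–Gessel–Viennot cancellation for Schröder-type paths). -/

import Mathlib

/-- A Schröder-type path from `src` to `tgt`. -/
def IsSchroderPath (p : List (ℤ × ℤ)) (src tgt : ℤ × ℤ) : Prop :=
  p.head? = some src ∧ p.getLast? = some tgt ∧
    p.Chain' fun u v => v - u = (0, 1) ∨ v - u = (-1, 1) ∨ v - u = (-1, 0)

namespace LGVAux

open List

abbrev Pt := ℤ × ℤ

def Stp (u v : Pt) : Prop := v - u = (0,1) ∨ v - u = (-1,1) ∨ v - u = (-1,0)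

lemma isp_iff (p : List Pt) (src tgt : Pt) :
    IsSchroderPath p src tgt ↔ p.head? = some src ∧ p.getLast? = some tgt ∧ p.Chain' Stp :=
  Iff.rfl

lemma stp_cases {u v : Pt} (h : Stp u v) :
    (v.1 = u.1 ∧ v.2 = u.2 + 1) ∨ (v.1 = u.1 - 1 ∧ v.2 = u.2 + 1) ∨
      (v.1 = u.1 - 1 ∧ v.2 = u.2) := by
  rcases h with h | h | h <;>
  · have h1 := congrArg Prod.fst h
    have h2 := congrArg Prod.snd h
    simp [Prod.fst_sub, Prod.snd_sub] at h1 h2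
    omega

/-- weak monotonicity + strictly increasing `y - x`. -/
def Rwk (u v : Pt) : Prop := v.1 ≤ u.1 ∧ u.2 ≤ v.2 ∧ u.2 - u.1 < v.2 - v.1

instance : IsTrans Pt Rwk :=
  ⟨fun _ _ _ h g => ⟨le_trans g.1 h.1, le_trans h.2.1 g.2.1, lt_trans h.2.2 g.2.2⟩⟩

lemma stp_rwk {u v : Pt} (h : Stp u v) : Rwk u v := by
  rcases stp_cases h with ⟨h1, h2⟩ | ⟨h1, h2⟩ | ⟨h1, h2⟩ <;>
    exact ⟨by omega, by omega, by omega⟩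

lemma path_pairwise {p : List Pt} (hc : p.Chain' Stp) : p.Pairwise Rwk :=
  List.isChain_iff_pairwise.mp (List.IsChain.imp (fun _ _ h => stp_rwk h) hc)

lemma pairwise_mem_rel {α : Type*} {R : α → α → Prop} {l : List α} (h : l.Pairwise R)
    {u v : α} (hu : u ∈ l) (hv : v ∈ l) (hne : u ≠ v) : R u v ∨ R v u := by
  have h' : l.Pairwise fun a b => R a b ∨ R b a := h.imp Or.inl
  haveI : Std.Symm (fun a b => R a b ∨ R b a) := ⟨fun a b hab => hab.symm⟩
  exact h'.forall hu hv hne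

lemma pairwise_head {α : Type*} {R : α → α → Prop} {l : List α} (h : l.Pairwise R)
    {a u : α} (hh : l.head? = some a) (hu : u ∈ l) : u = a ∨ R a u := by
  cases l with
  | nil => simp at hh
  | cons x t =>
    simp only [head?_cons, Option.some.injEq] at hh
    subst hh
    rcases List.mem_cons.mp hu with rfl | hu
    · exact Or.inl rfl
    · exact Or.inr ((List.pairwise_cons.mp h).1 u hu)

lemma pairwise_last {α : Type*} {R : α → α → Prop} {l : List α} (h : l.Pairwise R)
    {b u : α} (hl : l.getLast? = some b) (hu : u ∈ l) : u = b ∨ R u b := by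
  induction l with
  | nil => simp at hl
  | cons x t ih =>
    cases t with
    | nil =>
      simp at hl hu; subst hl; exact Or.inl hu
    | cons y t' =>
      rw [List.getLast?_cons_cons] at hl
      rcases List.mem_cons.mp hu with rfl | hu
      · right
        have hb : b ∈ y :: t' := List.mem_of_mem_getLast? hl
        exact (List.pairwise_cons.mp h).1 b hb
      · exact ih (List.pairwise_cons.mp h).2 hl hu

lemma mem_bounds {p : List Pt} {src tgt : Pt} (hp : IsSchroderPath p src tgt)
    {u : Pt} (hu : u ∈ p) : tgt.1 ≤ u.1 ∧ u.1 ≤ src.1 ∧ src.2 ≤ u.2 ∧ u.2 ≤ tgt.2 := by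
  obtain ⟨hh, hl, hc⟩ := hp
  have hpw := path_pairwise hc
  have h1 := pairwise_head hpw hh hu
  have h2 := pairwise_last hpw hl hu
  rcases h1 with rfl | ⟨g1, g2, -⟩ <;> rcases h2 with rfl | ⟨f1, f2, -⟩ <;>
    exact ⟨by omega, by omega, by omega, by omega⟩

lemma path_nodup {p : List Pt} (hc : p.Chain' Stp) : p.Nodup :=
  (path_pairwise hc).imp fun h => by
    rintro rfl; exact absurd h.2.2 (lt_irrefl _)

lemma level_surj : ∀ {l : List Pt}, l.Chain' Stp →
    ∀ {s t : Pt}, l.head? = some s → l.getLast? = some t →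
    ∀ y : ℤ, s.2 ≤ y → y ≤ t.2 → ∃ u ∈ l, u.2 = y := by
  intro l
  induction l with
  | nil => intro _ s t hh; simp at hh
  | cons x t ih =>
    intro hc s tt hh hl y hy1 hy2
    simp only [head?_cons, Option.some.injEq] at hh
    obtain rfl : s = x := hh.symm
    cases t with
    | nil =>
      simp only [getLast?_singleton, Option.some.injEq] at hl
      subst hl
      exact ⟨s, List.mem_cons_self, by omega⟩
    | cons z t' =>
      by_cases hyx : y = s.2
      · exact ⟨s, List.mem_cons_self, hyx.symm⟩
      · rw [List.getLast?_cons_cons] at hl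
        have hstep : Stp s z := (List.isChain_cons_cons.mp hc).1
        have hz2 : z.2 = s.2 ∨ z.2 = s.2 + 1 := by
          rcases stp_cases hstep with ⟨-, h⟩ | ⟨-, h⟩ | ⟨-, h⟩ <;> omega
        obtain ⟨u, hu, hu2⟩ := ih (List.isChain_cons_cons.mp hc).2 (head?_cons)
          hl y (by omega) hy2
        exact ⟨u, List.mem_cons_of_mem _ hu, hu2⟩

lemma exists_transition {α : Type*} {S : α → α → Prop} (C : α → Prop) :
    ∀ l : List α, l.Chain' S → ∀ a b, l.head? = some a → l.getLast? = some b →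
      ¬ C a → C b → ∃ u ∈ l, ∃ v ∈ l, S u v ∧ ¬ C u ∧ C v := by
  intro l
  induction l with
  | nil => intro _ a b hh; simp at hh
  | cons x t ih =>
    intro hc a b hh hl hca hcb
    simp only [head?_cons, Option.some.injEq] at hh
    subst hh
    cases t with
    | nil =>
      simp at hl; subst hl; exact absurd hcb hca
    | cons y t' =>
      rw [List.getLast?_cons_cons] at hl
      by_cases hcy : C y
      · exact ⟨x, List.mem_cons_self, y, List.mem_cons_of_mem _ (List.mem_cons_self),
          (List.isChain_cons_cons.mp hc).1, hca, hcy⟩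
      · obtain ⟨u, hu, v, hv, h⟩ := ih (List.isChain_cons_cons.mp hc).2 y b head?_cons hl hcy hcb
        exact ⟨u, List.mem_cons_of_mem _ hu, v, List.mem_cons_of_mem _ hv, h⟩

theorem crossing {p q : List Pt} {a b c d : ℤ}
    (hp : IsSchroderPath p (a,0) (0,c)) (hq : IsSchroderPath q (b,0) (0,d))
    (hab : a < b) (hdc : d < c) : ∃ z, z ∈ p ∧ z ∈ q := by
  classical
  have hstart : ¬ ∃ w ∈ p, w.2 = ((b:ℤ), (0:ℤ)).2 ∧ ((b:ℤ),(0:ℤ)).1 ≤ w.1 := by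
    rintro ⟨w, hw, hw2, hw1⟩
    have h := (mem_bounds hp hw).2.1
    simp only at hw1 hw2 h
    omega
  have hdmem : ((0 : ℤ), d) ∈ q := List.mem_of_mem_getLast? hq.2.1
  have hd0 : (0:ℤ) ≤ d := by simpa using (mem_bounds hq hdmem).2.2.1
  have hend : ∃ w ∈ p, w.2 = ((0:ℤ), d).2 ∧ ((0:ℤ), d).1 ≤ w.1 := by
    obtain ⟨w, hw, hw2⟩ := level_surj hp.2.2 hp.1 hp.2.1 d (by simpa using hd0)
      (by simpa using hdc.le)
    refine ⟨w, hw, by simpa using hw2, by simpa using (mem_bounds hp hw).1⟩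
  obtain ⟨u, hu, v, hv, hs, hncu, hcv⟩ :=
    exists_transition (fun v : Pt => ∃ w ∈ p, w.2 = v.2 ∧ v.1 ≤ w.1) q hq.2.2 _ _
      hq.1 hq.2.1 hstart hend
  push_neg at hncu
  have hub := mem_bounds hq hu
  have hu0 : (0:ℤ) ≤ u.2 := by simpa using hub.2.2.1
  have hud : u.2 ≤ d := by simpa using hub.2.2.2
  obtain ⟨w', hw', hw'2⟩ := level_surj hp.2.2 hp.1 hp.2.1 u.2 (by simpa using hu0)
    (by simp only; omega)
  have hw'lt : w'.1 < u.1 := hncu w' hw' hw'2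
  obtain ⟨w, hw, hw2, hw1⟩ := hcv
  have hppw := path_pairwise hp.2.2
  rcases stp_cases hs with ⟨h1, h2⟩ | ⟨h1, h2⟩ | ⟨h1, h2⟩
  · -- vertical: impossible
    exfalso
    have hne : w ≠ w' := by intro h; rw [h] at hw2; omega
    have hle : w.1 ≤ w'.1 := by
      rcases pairwise_mem_rel hppw hw hw' hne with h | h
      · exfalso; have := h.2.1; omega
      · exact h.1
    omega
  · -- diagonal
    have hne : w ≠ w' := by intro h; rw [h] at hw2; omega
    have hle : w.1 ≤ w'.1 := by
      rcases pairwise_mem_rel hppw hw hw' hne with h | h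
      · exfalso; have := h.2.1; omega
      · exact h.1
    have hwv : w = v := by apply Prod.ext <;> omega
    exact ⟨w, hw, hwv ▸ hv⟩
  · -- horizontal
    have hwlt : w.1 < u.1 := hncu w hw (by omega)
    have hwv : w = v := by apply Prod.ext <;> omega
    exact ⟨w, hw, hwv ▸ hv⟩


/-! ### Finiteness -/

lemma length_bound : ∀ {l : List Pt}, l.Chain' Stp →
    ∀ {s t : Pt}, l.head? = some s → l.getLast? = some t →
    (l.length : ℤ) ≤ (t.2 - t.1) - (s.2 - s.1) + 1 := by
  intro l
  induction l with
  | nil => intro _ s t hh; simp at hh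
  | cons x t0 ih =>
    intro hc s tt hh hl
    simp only [head?_cons, Option.some.injEq] at hh
    obtain rfl : s = x := hh.symm
    cases t0 with
    | nil =>
      simp only [getLast?_singleton, Option.some.injEq] at hl
      subst hl
      simp
    | cons z t' =>
      rw [List.getLast?_cons_cons] at hl
      have hstep := stp_rwk (List.isChain_cons_cons.mp hc).1
      have ihb := ih (List.isChain_cons_cons.mp hc).2 head?_cons hl
      have h3 := hstep.2.2
      simp only [List.length_cons] at ihb ⊢
      push_cast at ihb ⊢
      omega

lemma pathSet_finite (src tgt : Pt) : {p : List Pt | IsSchroderPath p src tgt}.Finite := by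
  classical
  have hB : (Set.Icc ((tgt.1, src.2) : Pt) (src.1, tgt.2)).Finite := Set.finite_Icc _ _
  haveI := hB.to_subtype
  set N : ℕ := ((tgt.2 - tgt.1) - (src.2 - src.1) + 1).toNat with hN
  have hfin : {l : List (Set.Icc ((tgt.1, src.2) : Pt) (src.1, tgt.2)) |
      l.length ≤ N}.Finite := List.finite_length_le _ N
  refine Set.Finite.subset (hfin.image (fun l => l.map Subtype.val)) ?_
  intro p hp
  have hmem : ∀ u ∈ p, u ∈ Set.Icc ((tgt.1, src.2) : Pt) (src.1, tgt.2) := by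
    intro u hu
    have h := mem_bounds hp hu
    simp only [Set.mem_Icc, Prod.mk_le_mk, Prod.le_def]
    exact ⟨⟨h.1, h.2.2.1⟩, h.2.1, h.2.2.2⟩
  refine ⟨p.pmap (fun u h => (⟨u, h⟩ : Set.Icc ((tgt.1, src.2) : Pt) (src.1, tgt.2))) hmem,
    ?_, ?_⟩
  · simp only [Set.mem_setOf_eq, List.length_pmap]
    have hlen := length_bound hp.2.2 hp.1 hp.2.1
    omega
  · show List.map Subtype.val (p.pmap (fun u h =>
        (⟨u, h⟩ : Set.Icc ((tgt.1, src.2) : Pt) (src.1, tgt.2))) hmem) = p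
    rw [List.map_pmap]
    exact (List.pmap_eq_map (f := id) hmem).trans (List.map_id p)

def Fam {n : ℕ} (π : Equiv.Perm (Fin n)) (P : Fin n → List Pt) : Prop :=
  ∀ i : Fin n, IsSchroderPath (P i) ((i : ℤ), 0) (0, ((π i : ℕ) : ℤ))

lemma fam_finite {n : ℕ} (π : Equiv.Perm (Fin n)) :
    {P : Fin n → List Pt | Fam π P}.Finite := by
  refine Set.Finite.subset (Set.Finite.pi (fun i : Fin n =>
    pathSet_finite ((i : ℤ), 0) (0, ((π i : ℕ) : ℤ)))) ?_
  intro P hP i _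
  exact hP i

/-! ### Splicing two paths at a common point -/

def pre (l : List Pt) (z : Pt) : List Pt := l.takeWhile (fun w => decide (w ≠ z))

def cut (l : List Pt) (z : Pt) : List Pt := l.dropWhile (fun w => decide (w ≠ z))

def splice (p q : List Pt) (z : Pt) : List Pt := pre p z ++ cut q z

lemma pre_append_cut (l : List Pt) (z : Pt) : pre l z ++ cut l z = l := by
  unfold pre cut
  exact List.takeWhile_append_dropWhile

lemma mem_pre_ne {l : List Pt} {z w : Pt} (h : w ∈ pre l z) : w ≠ z := by
  simpa using List.mem_takeWhile_imp h

lemma pre_subset {l : List Pt} {z : Pt} : pre l z ⊆ l :=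
  (List.takeWhile_prefix _).subset

lemma cut_subset {l : List Pt} {z : Pt} : cut l z ⊆ l :=
  (List.dropWhile_suffix _).subset

lemma cut_head {l : List Pt} {z : Pt} (h : z ∈ l) : (cut l z).head? = some z := by
  induction l with
  | nil => simp at h
  | cons x t ih =>
    by_cases hx : x = z
    · subst hx; simp [cut]
    · have hz : z ∈ t := by
        rcases List.mem_cons.mp h with h0 | h0
        · exact absurd h0.symm hx
        · exact h0
      simpa [cut, List.dropWhile_cons, hx] using ih hz

lemma cut_ne_nil {l : List Pt} {z : Pt} (h : z ∈ l) : cut l z ≠ [] := by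
  intro h0
  have := cut_head h
  rw [h0] at this
  simp at this

lemma cut_cons {l : List Pt} {z : Pt} (h : z ∈ l) : ∃ r, cut l z = z :: r := by
  have hh := cut_head h
  cases hc : cut l z with
  | nil => rw [hc] at hh; simp at hh
  | cons a r =>
    rw [hc, head?_cons, Option.some.injEq] at hh
    exact ⟨r, by rw [hh]⟩

lemma mem_cut_self {l : List Pt} {z : Pt} (h : z ∈ l) : z ∈ cut l z := by
  obtain ⟨r, hr⟩ := cut_cons h
  rw [hr]
  exact List.mem_cons_self

lemma mem_splice_left {p q : List Pt} {z : Pt} (h : z ∈ q) : z ∈ splice p q z :=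
  List.mem_append_right _ (mem_cut_self h)

lemma mem_splice {p q : List Pt} {z w : Pt} (h : w ∈ splice p q z) : w ∈ p ∨ w ∈ q := by
  rcases List.mem_append.mp h with h | h
  · exact Or.inl (pre_subset h)
  · exact Or.inr (cut_subset h)

lemma head?_splice {p q : List Pt} {z : Pt} (hzp : z ∈ p) (hzq : z ∈ q) :
    (splice p q z).head? = p.head? := by
  have hp' := pre_append_cut p z
  cases hpre : pre p z with
  | nil =>
    rw [splice, hpre, List.nil_append, cut_head hzq, ← hp', hpre, List.nil_append,
      cut_head hzp]
  | cons a r =>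
    rw [splice, hpre, ← hp', hpre]
    simp

lemma getLast?_splice {p q : List Pt} {z : Pt} (hzq : z ∈ q) :
    (splice p q z).getLast? = q.getLast? := by
  have h2 : (cut q z).getLast?.isSome := by
    rw [List.getLast?_isSome]
    exact cut_ne_nil hzq
  obtain ⟨w, hw⟩ := Option.isSome_iff_exists.mp h2
  rw [splice, List.getLast?_append, hw, Option.some_or, ← pre_append_cut q z,
    List.getLast?_append, hw, Option.some_or]

lemma chain'_splice {p q : List Pt} {z : Pt} (hp : p.Chain' Stp) (hq : q.Chain' Stp)
    (hzp : z ∈ p) (hzq : z ∈ q) : (splice p q z).Chain' Stp := by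
  simp only [List.Chain'] at hp hq ⊢
  rw [splice, List.isChain_append]
  refine ⟨hp.prefix (List.takeWhile_prefix _), hq.suffix (List.dropWhile_suffix _), ?_⟩
  intro x hx y hy
  rw [cut_head hzq, Option.mem_some_iff] at hy
  subst hy
  have hp2 : (pre p z ++ cut p z).Chain' Stp := by rw [pre_append_cut]; exact hp
  refine (List.isChain_append.mp hp2).2.2 x hx z ?_
  rw [cut_head hzp]
  rfl

lemma pre_splice {p q : List Pt} {z : Pt} (hzq : z ∈ q) :
    pre (splice p q z) z = pre p z := by
  rw [splice, pre, List.takeWhile_append, if_pos]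
  · obtain ⟨r, hr⟩ := cut_cons hzq
    rw [hr, List.takeWhile_cons]
    simp [pre]
  · have h : List.takeWhile (fun w => decide (w ≠ z)) (pre p z) = pre p z := by
      apply List.takeWhile_eq_self_iff.mpr
      intro a ha
      unfold pre at ha
      exact List.mem_takeWhile_imp (p := fun w => decide (w ≠ z)) ha
    rw [h]

lemma cut_splice {p q : List Pt} {z : Pt} (hzq : z ∈ q) :
    cut (splice p q z) z = cut q z := by
  rw [splice, cut, List.dropWhile_append, if_pos]
  · obtain ⟨r, hr⟩ := cut_cons hzq
    rw [hr, List.dropWhile_cons]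
    simp [cut]
  · rw [List.isEmpty_iff, List.dropWhile_eq_nil_iff]
    intro a ha
    unfold pre at ha
    exact List.mem_takeWhile_imp (p := fun w => decide (w ≠ z)) ha

lemma splice_splice {p q : List Pt} {z : Pt} (hzp : z ∈ p) (hzq : z ∈ q) :
    splice (splice p q z) (splice q p z) z = p := by
  rw [splice, pre_splice hzq, cut_splice hzp, pre_append_cut]

lemma find?_takeWhile_false {pr : Pt → Bool} {l : List Pt} {z : Pt}
    (h : l.find? pr = some z) :
    ∀ w ∈ l.takeWhile (fun w => decide (w ≠ z)), pr w = false := by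
  induction l with
  | nil => simp
  | cons x t ih =>
    intro w hw
    cases hpx : pr x with
    | true =>
      rw [List.find?_cons_of_pos hpx, Option.some.injEq] at h
      subst h
      rw [List.takeWhile_cons] at hw
      simp at hw
    | false =>
      rw [List.find?_cons_of_neg (by simp [hpx])] at h
      rw [List.takeWhile_cons] at hw
      by_cases hxz : x = z
      · subst hxz; simp at hw
      · rw [if_pos (by simpa using hxz)] at hw
        rcases List.mem_cons.mp hw with rfl | hw
        · exact hpx
        · exact ih h w hw


/-! ### The sign-reversing involution -/

section Invol

variable {n : ℕ}

def Meets (P : Fin n → List Pt) (i : Fin n) : Prop :=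
  ∃ j, j ≠ i ∧ ∃ z, z ∈ P i ∧ z ∈ P j

def BadF (P : Fin n → List Pt) : Prop := ∃ i, Meets P i

instance (P : Fin n → List Pt) (i : Fin n) : Decidable (Meets P i) := by
  unfold Meets; infer_instance

noncomputable def selI (P : Fin n → List Pt) (h : BadF P) : Fin n :=
  (Finset.univ.filter (Meets P)).min' (by
    obtain ⟨i, hi⟩ := h
    exact ⟨i, Finset.mem_filter.mpr ⟨Finset.mem_univ _, hi⟩⟩)

lemma selI_meets (P : Fin n → List Pt) (h : BadF P) : Meets P (selI P h) :=
  (Finset.mem_filter.mp (Finset.min'_mem _ _)).2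

lemma selI_min {P : Fin n → List Pt} (h : BadF P) {k : Fin n} (hk : Meets P k) :
    selI P h ≤ k :=
  Finset.min'_le _ _ (Finset.mem_filter.mpr ⟨Finset.mem_univ _, hk⟩)

lemma min'_eq_of {s : Finset (Fin n)} (hne : s.Nonempty) {a : Fin n} (ha : a ∈ s)
    (hmin : ∀ b ∈ s, a ≤ b) : s.min' hne = a :=
  le_antisymm (Finset.min'_le _ _ ha) (Finset.le_min' _ _ _ hmin)

def prB (P : Fin n → List Pt) (i : Fin n) : Pt → Bool :=
  fun z => decide (∃ j, j ≠ i ∧ z ∈ P j)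

lemma find?_isSome_selI (P : Fin n → List Pt) (h : BadF P) :
    ((P (selI P h)).find? (prB P (selI P h))).isSome = true := by
  rw [List.find?_isSome]
  obtain ⟨j, hj, z, hzi, hzj⟩ := selI_meets P h
  exact ⟨z, hzi, by simp only [prB, decide_eq_true_eq]; exact ⟨j, hj, hzj⟩⟩

noncomputable def selZ (P : Fin n → List Pt) (h : BadF P) : Pt :=
  ((P (selI P h)).find? (prB P (selI P h))).get (find?_isSome_selI P h)

lemma selZ_spec (P : Fin n → List Pt) (h : BadF P) :
    (P (selI P h)).find? (prB P (selI P h)) = some (selZ P h) :=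
  (Option.some_get _).symm

lemma selZ_mem_i (P : Fin n → List Pt) (h : BadF P) : selZ P h ∈ P (selI P h) :=
  List.mem_of_find?_eq_some (selZ_spec P h)

lemma selZ_pr (P : Fin n → List Pt) (h : BadF P) :
    ∃ j, j ≠ selI P h ∧ selZ P h ∈ P j := by
  have := List.find?_some (selZ_spec P h)
  simpa only [prB, decide_eq_true_eq] using this

noncomputable def selJ (P : Fin n → List Pt) (h : BadF P) : Fin n :=
  (Finset.univ.filter (fun j => j ≠ selI P h ∧ selZ P h ∈ P j)).min' (by
    obtain ⟨j, hj, hm⟩ := selZ_pr P h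
    exact ⟨j, Finset.mem_filter.mpr ⟨Finset.mem_univ _, hj, hm⟩⟩)

lemma selJ_spec (P : Fin n → List Pt) (h : BadF P) :
    selJ P h ≠ selI P h ∧ selZ P h ∈ P (selJ P h) := by
  have hmem : selJ P h ∈ Finset.univ.filter
      (fun j => j ≠ selI P h ∧ selZ P h ∈ P j) := Finset.min'_mem _ _
  exact (Finset.mem_filter.mp hmem).2

lemma selJ_min {P : Fin n → List Pt} (h : BadF P) {k : Fin n}
    (hk : k ≠ selI P h ∧ selZ P h ∈ P k) : selJ P h ≤ k := by
  apply Finset.min'_le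
  exact Finset.mem_filter.mpr ⟨Finset.mem_univ _, hk⟩

lemma selI_le_selJ (P : Fin n → List Pt) (h : BadF P) : selI P h ≤ selJ P h :=
  selI_min h ⟨selI P h, Ne.symm (selJ_spec P h).1, selZ P h,
    (selJ_spec P h).2, selZ_mem_i P h⟩

noncomputable def swapF (P : Fin n → List Pt) (h : BadF P) : Fin n → List Pt :=
  Function.update (Function.update P (selI P h)
      (splice (P (selI P h)) (P (selJ P h)) (selZ P h)))
    (selJ P h) (splice (P (selJ P h)) (P (selI P h)) (selZ P h))

lemma swapF_selJ (P : Fin n → List Pt) (h : BadF P) : swapF P h (selJ P h) =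
    splice (P (selJ P h)) (P (selI P h)) (selZ P h) :=
  Function.update_self _ _ _

lemma swapF_selI (P : Fin n → List Pt) (h : BadF P) : swapF P h (selI P h) =
    splice (P (selI P h)) (P (selJ P h)) (selZ P h) := by
  rw [swapF, Function.update_of_ne (Ne.symm (selJ_spec P h).1)]
  exact Function.update_self _ _ _

lemma swapF_other (P : Fin n → List Pt) (h : BadF P) {k : Fin n}
    (h1 : k ≠ selI P h) (h2 : k ≠ selJ P h) : swapF P h k = P k := by
  rw [swapF, Function.update_of_ne h2, Function.update_of_ne h1]

lemma fam_swapF {π : Equiv.Perm (Fin n)} {P : Fin n → List Pt}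
    (hfam : Fam π P) (h : BadF P) :
    Fam (π * Equiv.swap (selI P h) (selJ P h)) (swapF P h) := by
  intro k
  have hzi := selZ_mem_i P h
  have hzj := (selJ_spec P h).2
  by_cases hki : k = selI P h
  · rw [hki, swapF_selI]
    obtain ⟨h1, h2, h3⟩ := hfam (selJ P h)
    obtain ⟨g1, g2, g3⟩ := hfam (selI P h)
    have hap : (π * Equiv.swap (selI P h) (selJ P h)) (selI P h) = π (selJ P h) := by
      simp [Equiv.Perm.mul_apply, Equiv.swap_apply_left]
    refine ⟨?_, ?_, chain'_splice g3 h3 hzi hzj⟩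
    · rw [head?_splice hzi hzj]; exact g1
    · rw [getLast?_splice hzj, hap]; exact h2
  · by_cases hkj : k = selJ P h
    · rw [hkj, swapF_selJ]
      obtain ⟨h1, h2, h3⟩ := hfam (selI P h)
      obtain ⟨g1, g2, g3⟩ := hfam (selJ P h)
      have hap : (π * Equiv.swap (selI P h) (selJ P h)) (selJ P h) = π (selI P h) := by
        simp [Equiv.Perm.mul_apply, Equiv.swap_apply_right]
      refine ⟨?_, ?_, chain'_splice g3 h3 hzj hzi⟩
      · rw [head?_splice hzj hzi]; exact g1
      · rw [getLast?_splice hzi, hap]; exact h2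
    · have hap : (π * Equiv.swap (selI P h) (selJ P h)) k = π k := by
        simp [Equiv.Perm.mul_apply, Equiv.swap_apply_of_ne_of_ne hki hkj]
      rw [swapF_other P h hki hkj, hap]
      exact hfam k

lemma badF_swapF (P : Fin n → List Pt) (h : BadF P) : BadF (swapF P h) :=
  ⟨selI P h, selJ P h, (selJ_spec P h).1, selZ P h,
    by rw [swapF_selI]; exact mem_splice_left (selJ_spec P h).2,
    by rw [swapF_selJ]; exact mem_splice_left (selZ_mem_i P h)⟩

lemma selI_swapF (P : Fin n → List Pt) (h : BadF P) (h' : BadF (swapF P h)) :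
    selI (swapF P h) h' = selI P h := by
  apply min'_eq_of
  · refine Finset.mem_filter.mpr ⟨Finset.mem_univ _, ?_⟩
    exact ⟨selJ P h, (selJ_spec P h).1, selZ P h,
      by rw [swapF_selI]; exact mem_splice_left (selJ_spec P h).2,
      by rw [swapF_selJ]; exact mem_splice_left (selZ_mem_i P h)⟩
  · intro b hb
    have hm : Meets (swapF P h) b := (Finset.mem_filter.mp hb).2
    by_contra hlt
    push_neg at hlt
    obtain ⟨j, hj, w, hw1, hw2⟩ := hm
    have hbi : b ≠ selI P h := ne_of_lt hlt
    have hbj : b ≠ selJ P h := ne_of_lt (lt_of_lt_of_le hlt (selI_le_selJ P h))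
    rw [swapF_other P h hbi hbj] at hw1
    have hmb : Meets P b := by
      by_cases hji : j = selI P h
      · subst hji
        rw [swapF_selI] at hw2
        rcases mem_splice hw2 with hw | hw
        · exact ⟨selI P h, Ne.symm hbi, w, hw1, hw⟩
        · exact ⟨selJ P h, Ne.symm hbj, w, hw1, hw⟩
      · by_cases hjj : j = selJ P h
        · subst hjj
          rw [swapF_selJ] at hw2
          rcases mem_splice hw2 with hw | hw
          · exact ⟨selJ P h, Ne.symm hbj, w, hw1, hw⟩
          · exact ⟨selI P h, Ne.symm hbi, w, hw1, hw⟩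
        · rw [swapF_other P h hji hjj] at hw2
          exact ⟨j, hj, w, hw1, hw2⟩
    exact absurd (selI_min h hmb) (not_le.mpr hlt)

lemma selZ_swapF (P : Fin n → List Pt) (hch : ∀ i, (P i).Chain' Stp)
    (h : BadF P) (h' : BadF (swapF P h)) :
    selZ (swapF P h) h' = selZ P h := by
  have hzi := selZ_mem_i P h
  have hzj := (selJ_spec P h).2
  have hfind : (swapF P h (selI (swapF P h) h')).find?
      (prB (swapF P h) (selI (swapF P h) h')) = some (selZ P h) := by
    rw [selI_swapF P h h', swapF_selI, splice, List.find?_append]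
    have hnone : (pre (P (selI P h)) (selZ P h)).find?
        (prB (swapF P h) (selI P h)) = none := by
      rw [List.find?_eq_none]
      intro w hw
      have hwP : w ∈ P (selI P h) := pre_subset hw
      have hwold : prB P (selI P h) w = false := by
        have hw' := hw
        unfold pre at hw'
        exact find?_takeWhile_false (selZ_spec P h) w hw'
      simp only [prB, decide_eq_false_iff_not] at hwold
      intro hcon
      rw [prB, decide_eq_true_eq] at hcon
      obtain ⟨j, hj, hwj⟩ := hcon
      by_cases hjj : j = selJ P h
      · subst hjj
        rw [swapF_selJ] at hwj
        rcases List.mem_append.mp hwj with hw2 | hw2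
        · exact hwold ⟨selJ P h, (selJ_spec P h).1, pre_subset hw2⟩
        · have hnd : (pre (P (selI P h)) (selZ P h) ++
              cut (P (selI P h)) (selZ P h)).Nodup := by
            rw [pre_append_cut]; exact path_nodup (hch (selI P h))
          exact (List.disjoint_of_nodup_append hnd) hw hw2
      · rw [swapF_other P h hj hjj] at hwj
        exact hwold ⟨j, hj, hwj⟩
    rw [hnone]
    obtain ⟨r, hr⟩ := cut_cons hzj
    rw [hr, List.find?_cons_of_pos]
    · rfl
    · rw [prB, decide_eq_true_eq]
      exact ⟨selJ P h, (selJ_spec P h).1, by rw [swapF_selJ]; exact mem_splice_left hzi⟩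
  have hspec := selZ_spec (swapF P h) h'
  rw [hfind] at hspec
  simpa using hspec.symm

lemma selJ_swapF (P : Fin n → List Pt) (hch : ∀ i, (P i).Chain' Stp)
    (h : BadF P) (h' : BadF (swapF P h)) :
    selJ (swapF P h) h' = selJ P h := by
  apply min'_eq_of
  · refine Finset.mem_filter.mpr ⟨Finset.mem_univ _, ?_, ?_⟩
    · rw [selI_swapF P h h']; exact (selJ_spec P h).1
    · rw [selZ_swapF P hch h h', swapF_selJ]
      exact mem_splice_left (selZ_mem_i P h)
  · intro b hb
    obtain ⟨-, hb1, hb2⟩ := Finset.mem_filter.mp hb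
    rw [selI_swapF P h h'] at hb1
    rw [selZ_swapF P hch h h'] at hb2
    by_cases hbj : b = selJ P h
    · exact le_of_eq hbj.symm
    · rw [swapF_other P h hb1 hbj] at hb2
      exact selJ_min h ⟨hb1, hb2⟩

lemma swapF_swapF (P : Fin n → List Pt) (hch : ∀ i, (P i).Chain' Stp)
    (h : BadF P) (h' : BadF (swapF P h)) :
    swapF (swapF P h) h' = P := by
  have e1 := selI_swapF P h h'
  have e2 := selZ_swapF P hch h h'
  have e3 := selJ_swapF P hch h h'
  funext k
  by_cases hki : k = selI P h
  · subst hki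
    have hstep : swapF (swapF P h) h' (selI P h) =
        splice (swapF P h (selI P h)) (swapF P h (selJ P h)) (selZ P h) := by
      conv_lhs => rw [← e1]
      rw [swapF_selI (swapF P h) h', e1, e2, e3]
    rw [hstep, swapF_selI, swapF_selJ]
    exact splice_splice (selZ_mem_i P h) ((selJ_spec P h).2)
  · by_cases hkj : k = selJ P h
    · subst hkj
      have hstep : swapF (swapF P h) h' (selJ P h) =
          splice (swapF P h (selJ P h)) (swapF P h (selI P h)) (selZ P h) := by
        conv_lhs => rw [← e3]
        rw [swapF_selJ (swapF P h) h', e1, e2, e3]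
      rw [hstep, swapF_selI, swapF_selJ]
      exact splice_splice ((selJ_spec P h).2) (selZ_mem_i P h)
    · have h1 : k ≠ selI (swapF P h) h' := by rw [e1]; exact hki
      have h2 : k ≠ selJ (swapF P h) h' := by rw [e3]; exact hkj
      rw [swapF_other (swapF P h) h' h1 h2, swapF_other P h hki hkj]

end Invol


/-! ### Assembling the sum -/

lemma card_split {α : Type*} (p q : α → Prop) (hfin : Finite {x // p x}) :
    Nat.card {x // p x} = Nat.card {x // p x ∧ q x} + Nat.card {x // p x ∧ ¬ q x} := by
  classical
  haveI := hfin
  calc Nat.card {x // p x}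
      = Nat.card ({y : {x // p x} // q y.val} ⊕ {y : {x // p x} // ¬ q y.val}) :=
        (Nat.card_congr (Equiv.sumCompl _)).symm
    _ = Nat.card {y : {x // p x} // q y.val} + Nat.card {y : {x // p x} // ¬ q y.val} :=
        Nat.card_sum
    _ = Nat.card {x // p x ∧ q x} + Nat.card {x // p x ∧ ¬ q x} := by
        rw [Nat.card_congr (Equiv.subtypeSubtypeEquivSubtypeInter p q),
          Nat.card_congr (Equiv.subtypeSubtypeEquivSubtypeInter p (fun x => ¬ q x))]

lemma strictMono_le_apply {n : ℕ} {f : Fin n → Fin n} (hf : StrictMono f) (i : Fin n) :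
    i ≤ f i := by
  have key : ∀ k : ℕ, ∀ i : Fin n, (i : ℕ) = k → (i : ℕ) ≤ (f i : ℕ) := by
    intro k
    induction k using Nat.strong_induction_on with
    | _ k ih =>
      intro i hik
      by_cases h0 : k = 0
      · omega
      · have hklt : k - 1 < n := by have := i.isLt; omega
        have hji : (⟨k - 1, hklt⟩ : Fin n) < i := by
          rw [Fin.lt_def]
          simp only []
          omega
        have h1 : k - 1 ≤ ((f ⟨k - 1, hklt⟩ : Fin n) : ℕ) := by
          have := ih (k - 1) (by omega) ⟨k - 1, hklt⟩ rfl
          simpa using this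
        have h2 : ((f ⟨k - 1, hklt⟩ : Fin n) : ℕ) < ((f i : Fin n) : ℕ) := hf hji
        omega
  rw [Fin.le_def]
  exact key (i : ℕ) i rfl

lemma perm_eq_one_of_strictMono {n : ℕ} {π : Equiv.Perm (Fin n)}
    (hmono : StrictMono ⇑π) : π = 1 := by
  have hinv : StrictMono ⇑π⁻¹ := by
    intro a b hab
    rcases lt_trichotomy (π⁻¹ a) (π⁻¹ b) with hc | hc | hc
    · exact hc
    · exfalso
      have := congrArg π hc
      simp only [Equiv.Perm.inv_def, Equiv.apply_symm_apply] at this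
      exact hab.ne this
    · exfalso
      have := hmono hc
      simp only [Equiv.Perm.inv_def, Equiv.apply_symm_apply] at this
      exact absurd this (lt_asymm hab)
  apply Equiv.ext
  intro i
  have h1 : i ≤ π i := strictMono_le_apply hmono i
  have h2 : π i ≤ π⁻¹ (π i) := strictMono_le_apply hinv (π i)
  rw [Equiv.Perm.inv_def, Equiv.symm_apply_apply] at h2
  simpa using le_antisymm h2 h1

lemma exists_inversion {n : ℕ} {π : Equiv.Perm (Fin n)} (hπ : π ≠ 1) :
    ∃ i j : Fin n, i < j ∧ π j < π i := by
  by_contra hno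
  push_neg at hno
  exact hπ (perm_eq_one_of_strictMono (fun a b hab =>
    lt_of_le_of_ne (hno a b hab) (fun hq => hab.ne (π.injective hq))))

lemma good_empty {n : ℕ} {π : Equiv.Perm (Fin n)} (hπ : π ≠ 1) :
    IsEmpty {P : Fin n → List Pt // Fam π P ∧ ¬ BadF P} := by
  constructor
  rintro ⟨P, hfam, hgood⟩
  obtain ⟨i, j, hij, hji⟩ := exists_inversion hπ
  have hij' : ((i : ℕ) : ℤ) < ((j : ℕ) : ℤ) := by
    have h : (i : ℕ) < (j : ℕ) := hij
    exact_mod_cast h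
  have hji' : (((π j) : ℕ) : ℤ) < (((π i) : ℕ) : ℤ) := by
    have h : ((π j) : ℕ) < ((π i) : ℕ) := hji
    exact_mod_cast h
  obtain ⟨z, hzi, hzj⟩ := crossing (hfam i) (hfam j) hij' hji'
  exact hgood ⟨i, j, hij.ne', z, hzi, hzj⟩

noncomputable def invol (n : ℕ)
    (t : Σ π : Equiv.Perm (Fin n), {P : Fin n → List Pt // Fam π P ∧ BadF P}) :
    Σ π : Equiv.Perm (Fin n), {P : Fin n → List Pt // Fam π P ∧ BadF P} :=
  ⟨t.1 * Equiv.swap (selI t.2.1 t.2.2.2) (selJ t.2.1 t.2.2.2),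
    ⟨swapF t.2.1 t.2.2.2, fam_swapF t.2.2.1 t.2.2.2, badF_swapF _ _⟩⟩

lemma invol_fst (n : ℕ)
    (t : Σ π : Equiv.Perm (Fin n), {P : Fin n → List Pt // Fam π P ∧ BadF P}) :
    (invol n t).1 = t.1 * Equiv.swap (selI t.2.1 t.2.2.2) (selJ t.2.1 t.2.2.2) := rfl

lemma sigma_sub_ext {n : ℕ} {F : Equiv.Perm (Fin n) → (Fin n → List Pt) → Prop}
    {a b : Σ π : Equiv.Perm (Fin n), {P : Fin n → List Pt // F π P}}
    (h1 : a.1 = b.1) (h2 : a.2.val = b.2.val) : a = b := by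
  obtain ⟨a1, a2⟩ := a
  obtain ⟨b1, b2⟩ := b
  dsimp only at h1
  subst h1
  exact congrArg _ (Subtype.ext h2)

set_option maxHeartbeats 1000000 in
lemma invol_invol (n : ℕ)
    (t : Σ π : Equiv.Perm (Fin n), {P : Fin n → List Pt // Fam π P ∧ BadF P}) :
    invol n (invol n t) = t := by
  obtain ⟨π, P, hP⟩ := t
  have hch : ∀ i, (P i).Chain' Stp := fun i => (hP.1 i).2.2
  refine sigma_sub_ext ?_ ?_
  · show (π * Equiv.swap (selI P hP.2) (selJ P hP.2)) *
        Equiv.swap (selI (swapF P hP.2) (badF_swapF P hP.2))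
          (selJ (swapF P hP.2) (badF_swapF P hP.2)) = π
    rw [selI_swapF P hP.2 (badF_swapF P hP.2),
      selJ_swapF P hch hP.2 (badF_swapF P hP.2),
      mul_assoc, Equiv.swap_mul_self, mul_one]
  · show swapF (swapF P hP.2) (badF_swapF P hP.2) = P
    exact swapF_swapF P hch hP.2 (badF_swapF P hP.2)

lemma invol_sign (n : ℕ)
    (t : Σ π : Equiv.Perm (Fin n), {P : Fin n → List Pt // Fam π P ∧ BadF P}) :
    ((Equiv.Perm.sign (invol n t).1 : ℤˣ) : ℤ) = - ((Equiv.Perm.sign t.1 : ℤˣ) : ℤ) := by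
  rw [invol_fst, Equiv.Perm.sign_mul,
    Equiv.Perm.sign_swap (Ne.symm (selJ_spec _ _).1)]
  rw [Units.val_mul]
  simp

lemma invol_ne (n : ℕ)
    (t : Σ π : Equiv.Perm (Fin n), {P : Fin n → List Pt // Fam π P ∧ BadF P}) :
    invol n t ≠ t := by
  intro he
  have h1 : t.1 * Equiv.swap (selI t.2.1 t.2.2.2) (selJ t.2.1 t.2.2.2) = t.1 := by
    have := congrArg Sigma.fst he
    rwa [invol_fst] at this
  have h2 : Equiv.swap (selI t.2.1 t.2.2.2) (selJ t.2.1 t.2.2.2) = 1 := by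
    have := congrArg (fun x => t.1⁻¹ * x) h1
    simpa [← mul_assoc] using this
  exact (selJ_spec t.2.1 t.2.2.2).1 ((Equiv.swap_eq_one_iff.mp h2).symm)

lemma bad_sum_zero (n : ℕ) :
    ∑ π : Equiv.Perm (Fin n), (Equiv.Perm.sign π : ℤ) *
      (Nat.card {P : Fin n → List Pt // Fam π P ∧ BadF P} : ℤ) = 0 := by
  classical
  haveI hFin : ∀ π : Equiv.Perm (Fin n),
      Fintype {P : Fin n → List Pt // Fam π P ∧ BadF P} := by
    intro π
    have hsub : ({P : Fin n → List Pt | Fam π P ∧ BadF P} : Set _).Finite :=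
      (fam_finite π).subset (fun P hP => hP.1)
    exact @Fintype.ofFinite _ hsub.to_subtype
  have hterm : ∀ π : Equiv.Perm (Fin n),
      (Equiv.Perm.sign π : ℤ) * (Nat.card {P : Fin n → List Pt // Fam π P ∧ BadF P} : ℤ)
      = ∑ _x : {P : Fin n → List Pt // Fam π P ∧ BadF P}, (Equiv.Perm.sign π : ℤ) := by
    intro π
    rw [Finset.sum_const, Finset.card_univ, Nat.card_eq_fintype_card, nsmul_eq_mul,
      mul_comm]
  rw [Finset.sum_congr rfl (fun π _ => hterm π),
    Finset.sum_sigma' Finset.univ (fun _ => Finset.univ)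
      (fun π _x => ((Equiv.Perm.sign π : ℤˣ) : ℤ)),
    Finset.univ_sigma_univ]
  refine Finset.sum_involution (fun t _ => invol n t) ?_ ?_ ?_ ?_
  · intro a _
    rw [invol_sign]
    simp
  · intro a _ _
    exact invol_ne n a
  · intro a _
    exact Finset.mem_univ _
  · intro a _
    exact invol_invol n a

end LGVAux

theorem lgv_cancellation (n : ℕ) :
    (∑ π : Equiv.Perm (Fin n), (Equiv.Perm.sign π : ℤ) *
        (Nat.card {P : Fin n → List (ℤ × ℤ) //
            ∀ i : Fin n, IsSchroderPath (P i) ((i : ℤ), 0) (0, ((π i : ℕ) : ℤ))} : ℤ))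
      = (Nat.card {P : Fin n → List (ℤ × ℤ) //
          (∀ i : Fin n, IsSchroderPath (P i) ((i : ℤ), 0) (0, (i : ℤ))) ∧
          ∀ i j : Fin n, i ≠ j → ∀ x : ℤ × ℤ, x ∈ P i → x ∉ P j} : ℤ) := by
  classical
  have hsplit : ∀ π : Equiv.Perm (Fin n),
      (Nat.card {P : Fin n → List (ℤ × ℤ) //
          ∀ i : Fin n, IsSchroderPath (P i) ((i : ℤ), 0) (0, ((π i : ℕ) : ℤ))} : ℤ)
      = (Nat.card {P : Fin n → List LGVAux.Pt // LGVAux.Fam π P ∧ LGVAux.BadF P} : ℤ)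
        + (Nat.card {P : Fin n → List LGVAux.Pt //
            LGVAux.Fam π P ∧ ¬ LGVAux.BadF P} : ℤ) := by
    intro π
    have h := LGVAux.card_split (LGVAux.Fam π) LGVAux.BadF
      ((LGVAux.fam_finite π).to_subtype)
    exact_mod_cast h
  have h1 : (∑ π : Equiv.Perm (Fin n), (Equiv.Perm.sign π : ℤ) *
        (Nat.card {P : Fin n → List (ℤ × ℤ) //
            ∀ i : Fin n, IsSchroderPath (P i) ((i : ℤ), 0) (0, ((π i : ℕ) : ℤ))} : ℤ))
      = ∑ π : Equiv.Perm (Fin n),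
          ((Equiv.Perm.sign π : ℤ) *
            (Nat.card {P : Fin n → List LGVAux.Pt // LGVAux.Fam π P ∧ LGVAux.BadF P} : ℤ)
          + (Equiv.Perm.sign π : ℤ) *
            (Nat.card {P : Fin n → List LGVAux.Pt //
              LGVAux.Fam π P ∧ ¬ LGVAux.BadF P} : ℤ)) :=
    Finset.sum_congr rfl (fun π _ => by rw [hsplit π, mul_add])
  rw [h1, Finset.sum_add_distrib, LGVAux.bad_sum_zero n, zero_add]
  have h2 : (∑ π : Equiv.Perm (Fin n), (Equiv.Perm.sign π : ℤ) *
        (Nat.card {P : Fin n → List LGVAux.Pt //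
          LGVAux.Fam π P ∧ ¬ LGVAux.BadF P} : ℤ))
      = (Equiv.Perm.sign (1 : Equiv.Perm (Fin n)) : ℤ) *
        (Nat.card {P : Fin n → List LGVAux.Pt //
          LGVAux.Fam 1 P ∧ ¬ LGVAux.BadF P} : ℤ) := by
    apply Finset.sum_eq_single
    · intro b _ hb
      haveI := LGVAux.good_empty hb
      rw [Nat.card_of_isEmpty]
      simp
    · intro hmem
      exact absurd (Finset.mem_univ _) hmem
  rw [h2, Equiv.Perm.sign_one]
  have e : ∀ P : Fin n → List (ℤ × ℤ),
      (LGVAux.Fam 1 P ∧ ¬ LGVAux.BadF P) ↔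
      ((∀ i : Fin n, IsSchroderPath (P i) ((i : ℤ), 0) (0, (i : ℤ))) ∧
        ∀ i j : Fin n, i ≠ j → ∀ x : ℤ × ℤ, x ∈ P i → x ∉ P j) := by
    intro P
    constructor
    · rintro ⟨hf, hg⟩
      refine ⟨fun i => hf i, fun i j hij x hxi hxj => hg ⟨i, j, Ne.symm hij, x, hxi, hxj⟩⟩
    · rintro ⟨hf, hg⟩
      refine ⟨fun i => hf i, ?_⟩
      rintro ⟨i, j, hji, x, hxi, hxj⟩
      exact hg i j (Ne.symm hji) x hxi hxj
  have h3 : Nat.card {P : Fin n → List LGVAux.Pt // LGVAux.Fam 1 P ∧ ¬ LGVAux.BadF P}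
      = Nat.card {P : Fin n → List (ℤ × ℤ) //
          (∀ i : Fin n, IsSchroderPath (P i) ((i : ℤ), 0) (0, (i : ℤ))) ∧
          ∀ i j : Fin n, i ≠ j → ∀ x : ℤ × ℤ, x ∈ P i → x ∉ P j} :=
    Nat.card_congr (Equiv.subtypeEquivRight e)
  rw [h3]
  simp
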